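/- Let p be a probability mass function on the finite set {1,...,V}, let H(p) = −Σ_{v=1}^V p_v log p_v be its Shannon entropy (with 0 · log 0 = 0), and let y be sampled from p. Then E_{y∼p}[‖e_y − p‖²] ≤ 1 − e^{−H(p)}, where e_y is the one-hot vector of y. -/

import Mathlib

open scoped BigOperators

/-- **Per-step score–entropy bound (Lemma 2, Second-Order Moment and Entropy Connection).**
For a probability mass function `p` on `{1,…,V}` with Shannon entropy
`H(p) = −∑_v p_v log p_v` (convention `0 · log 0 = 0`, automatic since `Real.log 0 = 0`),
and `y ∼ p`, one has `E_{y∼p}[‖e_y − p‖²] ≤ 1 − e^{−H(p)}`. -/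
theorem expected_score_norm_sq_le_entropy_bound
    {V : ℕ} (p : EuclideanSpace ℝ (Fin V))
    (hnn : ∀ v, 0 ≤ p v) (hsum : ∑ v, p v = 1) :
    ∑ y, p y * ‖EuclideanSpace.single y (1 : ℝ) - p‖ ^ 2
      ≤ 1 - Real.exp (-(-(∑ v, p v * Real.log (p v)))) := by
  set S : ℝ := ∑ v, (p v) ^ 2 with hS
  have hpsq : ‖p‖ ^ 2 = S := by
    rw [← real_inner_self_eq_norm_sq]
    simp [EuclideanSpace.inner_eq_star_dotProduct]
    · rw [EuclideanSpace.norm_sq_eq, hS]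
      refine Finset.sum_congr rfl fun x _ => ?_
      rw [Real.norm_eq_abs, sq_abs]
  have hnorm : ∀ y : Fin V, ‖EuclideanSpace.single y (1 : ℝ) - p‖ ^ 2
      = 1 - 2 * p y + S := by
    intro y
    rw [norm_sub_sq_real, hpsq, EuclideanSpace.norm_single]
    have : inner ℝ (EuclideanSpace.single y (1 : ℝ)) p = p y := by
      simp [EuclideanSpace.inner_single_left]
    rw [this]
    norm_num
  have hLHS : ∑ y, p y * ‖EuclideanSpace.single y (1 : ℝ) - p‖ ^ 2 = 1 - S := by
    calc ∑ y, p y * ‖EuclideanSpace.single y (1 : ℝ) - p‖ ^ 2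
        = ∑ y, (p y - 2 * (p y)^2 + p y * S) := by
          refine Finset.sum_congr rfl fun y _ => ?_
          rw [hnorm y]; ring
      _ = (∑ y, p y) - 2 * S + (∑ y, p y) * S := by
          rw [Finset.sum_add_distrib, Finset.sum_sub_distrib, ← Finset.mul_sum,
            ← Finset.sum_mul, hS]
      _ = 1 - S := by rw [hsum]; ring
  have hjensen : Real.exp (∑ v, p v * Real.log (p v)) ≤ S := by
    have hconv : ConvexOn ℝ Set.univ Real.exp := convexOn_exp
    have h := hconv.map_sum_le (t := Finset.univ)
      (w := fun v => p v) (p := fun v => Real.log (p v))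
      (fun v _ => hnn v) (by rw [hsum]) (fun v _ => Set.mem_univ _)
    calc Real.exp (∑ v, p v * Real.log (p v))
        = Real.exp (∑ v, p v • Real.log (p v)) := by simp [smul_eq_mul]
      _ ≤ ∑ v, p v • Real.exp (Real.log (p v)) := h
      _ = S := by
          refine Finset.sum_congr rfl fun v _ => ?_
          rcases eq_or_lt_of_le (hnn v) with h0 | hpos
          · simp [← h0]
          · rw [smul_eq_mul, Real.exp_log hpos, sq]
  rw [hLHS, neg_neg]
  linarith
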